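/- The map μ ↦ MOT_C(μ) from (Δ_n)^k to ℝ is Lipschitz with respect to the entrywise ℓ₁ norm on the marginals, with Lipschitz constant 2·C_max, where C_max = max_{j⃗} |C_{j⃗}|. That is, |MOT_C(μ) − MOT_C(μ')| ≤ 2 C_max · Σ_{i=1}^k ‖μ_i − μ'_i‖₁. -/

import Mathlib

open Finset

noncomputable def marg {n k : ℕ} (P : (Fin k → Fin n) → ℝ) (i : Fin k) (j : Fin n) : ℝ :=
  ∑ x : Fin k → Fin n, if x i = j then P x else 0

def simplex {n : ℕ} (μ : Fin n → ℝ) : Prop :=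
  (∀ j, 0 ≤ μ j) ∧ ∑ j, μ j = 1

noncomputable def transport {n k : ℕ} (μ : Fin k → Fin n → ℝ) : Set ((Fin k → Fin n) → ℝ) :=
  {P | (∀ x, 0 ≤ P x) ∧ ∀ i j, marg P i j = μ i j}

noncomputable def dotT {n k : ℕ} (P C : (Fin k → Fin n) → ℝ) : ℝ :=
  ∑ x : Fin k → Fin n, P x * C x

noncomputable def MOT {n k : ℕ} (C : (Fin k → Fin n) → ℝ) (μ : Fin k → Fin n → ℝ) : ℝ :=
  sInf ((fun P => dotT P C) '' transport μ)

noncomputable def MINC {n k : ℕ} (C : (Fin k → Fin n) → ℝ) (p : Fin k → Fin n → ℝ) : ℝ :=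
  ⨅ x : Fin k → Fin n, (C x - ∑ i, p i (x i))

lemma marg_regroup {n k : ℕ} (P : (Fin k → Fin n) → ℝ) (g : Fin n → ℝ) (i : Fin k) :
    ∑ j, marg P i j * g j = ∑ x : Fin k → Fin n, P x * g (x i) := by
  unfold marg
  have : ∀ j : Fin n, (∑ x : Fin k → Fin n, if x i = j then P x else 0) * g j
      = ∑ x : Fin k → Fin n, if x i = j then P x * g j else 0 := by
    intro j
    rw [Finset.sum_mul]
    exact Finset.sum_congr rfl fun x _ => by rw [ite_mul, zero_mul]
  rw [Finset.sum_congr rfl fun j _ => this j, Finset.sum_comm]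
  refine Finset.sum_congr rfl fun x _ => ?_
  simp

lemma sum_marg {n k : ℕ} (P : (Fin k → Fin n) → ℝ) (i : Fin k) :
    ∑ j, marg P i j = ∑ x : Fin k → Fin n, P x := by
  have := marg_regroup P (fun _ => 1) i
  simpa using this

lemma marg_add {n k : ℕ} (P Q : (Fin k → Fin n) → ℝ) (i : Fin k) (j : Fin n) :
    marg (fun x => P x + Q x) i j = marg P i j + marg Q i j := by
  unfold marg
  rw [← Finset.sum_add_distrib]
  exact Finset.sum_congr rfl fun x _ => by split <;> simp

lemma marg_div {n k : ℕ} (P : (Fin k → Fin n) → ℝ) (c : ℝ) (i : Fin k) (j : Fin n) :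
    marg (fun x => P x / c) i j = marg P i j / c := by
  unfold marg
  rw [Finset.sum_div]
  exact Finset.sum_congr rfl fun x _ => by split <;> simp

lemma marg_prod {n k : ℕ} (g : Fin k → Fin n → ℝ) (i : Fin k) (j : Fin n) :
    marg (fun x => ∏ l, g l (x l)) i j
      = g i j * ∏ l ∈ univ.erase i, (∑ a, g l a) := by
  classical
  set h : Fin k → Fin n → ℝ :=
    fun l a => if l = i then (if a = j then g i a else 0) else g l a with hh
  have hrhs : ∀ x : Fin k → Fin n, ∏ l, h l (x l)
      = (if x i = j then g i (x i) else 0) * ∏ l ∈ univ.erase i, g l (x l) := by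
    intro x
    rw [← Finset.mul_prod_erase univ (fun l => h l (x l)) (mem_univ i)]
    congr 1
    · simp [hh]
    · exact Finset.prod_congr rfl fun l hl => by simp [hh, Finset.ne_of_mem_erase hl]
  have hlhs : ∀ x : Fin k → Fin n, (if x i = j then ∏ l, g l (x l) else 0)
      = (if x i = j then g i (x i) else 0) * ∏ l ∈ univ.erase i, g l (x l) := by
    intro x
    by_cases hx : x i = j
    · rw [if_pos hx, if_pos hx, ← Finset.mul_prod_erase univ (fun l => g l (x l)) (mem_univ i)]
    · simp [hx]
  unfold marg
  rw [Finset.sum_congr rfl fun x _ => (hlhs x).trans (hrhs x).symm]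
  have key := (Finset.prod_univ_sum (fun _ : Fin k => (univ : Finset (Fin n))) h).symm
  rw [Fintype.piFinset_univ] at key
  rw [key, ← Finset.mul_prod_erase univ (fun l => ∑ a, h l a) (mem_univ i)]
  congr 1
  · simp [hh]
  · exact Finset.prod_congr rfl fun l hl => Finset.sum_congr rfl fun a _ => by
      simp [hh, Finset.ne_of_mem_erase hl]

lemma one_sub_prod_le {ι : Type*} (s : Finset ι) (f : ι → ℝ) (h0 : ∀ i ∈ s, 0 ≤ f i)
    (h1 : ∀ i ∈ s, f i ≤ 1) : 1 - ∏ i ∈ s, f i ≤ ∑ i ∈ s, (1 - f i) := by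
  classical
  induction s using Finset.induction with
  | empty => simp
  | insert _ _ hx ih =>
    rename_i a s
    rw [Finset.prod_insert hx, Finset.sum_insert hx]
    have h0a := h0 a (mem_insert_self a s)
    have h1a := h1 a (mem_insert_self a s)
    have ihs := ih (fun i hi => h0 i (mem_insert_of_mem hi)) (fun i hi => h1 i (mem_insert_of_mem hi))
    have hps : ∏ i ∈ s, f i ≤ 1 := Finset.prod_le_one (fun i hi => h0 i (mem_insert_of_mem hi)) (fun i hi => h1 i (mem_insert_of_mem hi))
    nlinarith [Finset.prod_nonneg (fun i hi => h0 i (mem_insert_of_mem hi))]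

lemma prod_mem_transport {n k : ℕ} (μ : Fin k → Fin n → ℝ) (hμ : ∀ i, simplex (μ i)) :
    (fun x : Fin k → Fin n => ∏ i, μ i (x i)) ∈ transport μ := by
  constructor
  · exact fun x => Finset.prod_nonneg fun i _ => (hμ i).1 (x i)
  · intro i j
    rw [marg_prod]
    have : ∀ l ∈ univ.erase i, (∑ a, μ l a) = 1 := fun l _ => (hμ l).2
    rw [Finset.prod_congr rfl this, Finset.prod_const_one, mul_one]

lemma exists_close {n k : ℕ} (hn : 0 < n) (hk : 0 < k) (C : (Fin k → Fin n) → ℝ)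
    (μ μ' : Fin k → Fin n → ℝ) (hμ : ∀ i, simplex (μ i)) (hμ' : ∀ i, simplex (μ' i))
    (P : (Fin k → Fin n) → ℝ) (hP : P ∈ transport μ) :
    ∃ Q ∈ transport μ',
      dotT Q C ≤ dotT P C + 2 * (⨆ x : Fin k → Fin n, |C x|) * ∑ i, ∑ j, |μ i j - μ' i j| := by
  classical
  obtain ⟨hP0, hPm⟩ := hP
  have i₀ : Fin k := ⟨0, hk⟩
  -- the shrinking factors
  set f : Fin k → Fin n → ℝ :=
    fun i a => if μ i a = 0 then 0 else min (μ' i a) (μ i a) / μ i a with hf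
  have hμpos : ∀ i a, μ i a ≠ 0 → 0 < μ i a := fun i a h => lt_of_le_of_ne ((hμ i).1 a) (Ne.symm h)
  have hf0 : ∀ i a, 0 ≤ f i a := by
    intro i a; rw [hf]; dsimp only; split
    · exact le_refl 0
    · exact div_nonneg (le_min ((hμ' i).1 a) ((hμ i).1 a)) ((hμ i).1 a)
  have hf1 : ∀ i a, f i a ≤ 1 := by
    intro i a; rw [hf]; dsimp only; split
    · exact zero_le_one
    · exact (div_le_one (hμpos i a (by assumption))).mpr (min_le_right _ _)
  have hmul : ∀ i a, μ i a * f i a = min (μ' i a) (μ i a) := by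
    intro i a; rw [hf]; dsimp only; split
    · rename_i h; rw [h, zero_mul, min_eq_right]; exact (hμ' i).1 a
    · rename_i h; rw [mul_div_cancel₀ _ h]
  set Phat : (Fin k → Fin n) → ℝ := fun x => P x * ∏ i, f i (x i) with hPhatdef
  have hprod01 : ∀ x : Fin k → Fin n, 0 ≤ ∏ i, f i (x i) ∧ ∏ i, f i (x i) ≤ 1 := fun x =>
    ⟨Finset.prod_nonneg fun i _ => hf0 i (x i),
     Finset.prod_le_one (fun i _ => hf0 i (x i)) (fun i _ => hf1 i (x i))⟩
  have hPhat0 : ∀ x, 0 ≤ Phat x := fun x => mul_nonneg (hP0 x) (hprod01 x).1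
  have hPhatle : ∀ x, Phat x ≤ P x := fun x =>
    mul_le_of_le_one_right (hP0 x) (hprod01 x).2
  have hPsum : ∑ x : Fin k → Fin n, P x = 1 := by
    rw [← sum_marg P i₀, Finset.sum_congr rfl fun j _ => hPm i₀ j]
    exact (hμ i₀).2
  set s : ℝ := ∑ x : Fin k → Fin n, Phat x with hsdef
  have hs_le : s ≤ 1 := by
    rw [hsdef, ← hPsum]; exact Finset.sum_le_sum fun x _ => hPhatle x
  have h1s0 : 0 ≤ 1 - s := sub_nonneg.mpr hs_le
  -- marginal bound for Phat
  have hmarg_le : ∀ i j, marg Phat i j ≤ min (μ' i j) (μ i j) := by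
    intro i j
    have step1 : marg Phat i j ≤ ∑ x : Fin k → Fin n, if x i = j then P x * f i j else 0 := by
      unfold marg
      refine Finset.sum_le_sum fun x _ => ?_
      by_cases hx : x i = j
      · rw [if_pos hx, if_pos hx]
        refine mul_le_mul_of_nonneg_left ?_ (hP0 x)
        calc ∏ l, f l (x l) = f i (x i) * ∏ l ∈ univ.erase i, f l (x l) :=
              (Finset.mul_prod_erase univ (fun l => f l (x l)) (mem_univ i)).symm
          _ ≤ f i (x i) * 1 := by
              refine mul_le_mul_of_nonneg_left ?_ (hf0 i (x i))
              exact Finset.prod_le_one (fun l _ => hf0 l (x l)) (fun l _ => hf1 l (x l))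
          _ = f i j := by rw [mul_one, hx]
      · rw [if_neg hx, if_neg hx]
    have step2 : (∑ x : Fin k → Fin n, if x i = j then P x * f i j else 0)
        = μ i j * f i j := by
      have : ∀ x : Fin k → Fin n, (if x i = j then P x * f i j else 0)
          = (if x i = j then P x else 0) * f i j := by
        intro x; rw [ite_mul, zero_mul]
      rw [Finset.sum_congr rfl fun x _ => this x, ← Finset.sum_mul]
      rw [show (∑ x : Fin k → Fin n, if x i = j then P x else 0) = marg P i j from rfl, hPm]
    rw [step2, hmul] at step1
    exact step1
  set d : Fin k → Fin n → ℝ := fun i j => μ' i j - marg Phat i j with hddef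
  have hd0 : ∀ i j, 0 ≤ d i j := fun i j =>
    sub_nonneg.mpr ((hmarg_le i j).trans (min_le_left _ _))
  have hdsum : ∀ i, ∑ j, d i j = 1 - s := by
    intro i
    rw [hddef]; dsimp only
    rw [Finset.sum_sub_distrib, (hμ' i).2, sum_marg Phat i, ← hsdef]
  set e : (Fin k → Fin n) → ℝ :=
    fun x => (∏ i, d i (x i)) / (1 - s) ^ (k - 1) with hedef
  have he0 : ∀ x, 0 ≤ e x := fun x =>
    div_nonneg (Finset.prod_nonneg fun i _ => hd0 i (x i)) (pow_nonneg h1s0 _)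
  have hmarge : ∀ i j, marg e i j = d i j := by
    intro i j
    rw [hedef]
    rw [marg_div (fun x => ∏ l, d l (x l)) ((1 - s) ^ (k - 1)) i j, marg_prod]
    rw [Finset.prod_congr rfl (fun l (_ : l ∈ univ.erase i) => hdsum l), Finset.prod_const]
    rw [Finset.card_erase_of_mem (mem_univ i), Finset.card_univ, Fintype.card_fin]
    by_cases h1s : (1 : ℝ) - s = 0
    · have : d i j = 0 := by
        have hsum0 : ∑ j, d i j = 0 := by rw [hdsum i, h1s]
        exact (Finset.sum_eq_zero_iff_of_nonneg fun j _ => hd0 i j).mp hsum0 j (mem_univ j)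
      rw [this, zero_mul, zero_div]
    · rw [mul_div_cancel_right₀ _ (pow_ne_zero _ h1s)]
  refine ⟨fun x => Phat x + e x, ⟨fun x => add_nonneg (hPhat0 x) (he0 x), fun i j => by
    rw [marg_add, hmarge, hddef]; ring⟩, ?_⟩
  -- cost bound
  set Cm : ℝ := ⨆ x : Fin k → Fin n, |C x| with hCm
  have hne : Nonempty (Fin k → Fin n) := ⟨fun _ => ⟨0, hn⟩⟩
  have hbdd : BddAbove (Set.range fun x : Fin k → Fin n => |C x|) :=
    Set.Finite.bddAbove (Set.finite_range _)
  have hCle : ∀ x, |C x| ≤ Cm := fun x => le_ciSup hbdd x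
  have hCm0 : 0 ≤ Cm := (abs_nonneg _).trans (hCle hne.some)
  have hesum : ∑ x : Fin k → Fin n, e x = 1 - s := by
    rw [← sum_marg e i₀, Finset.sum_congr rfl fun j _ => hmarge i₀ j, hdsum i₀]
  set T : ℝ := ∑ i, ∑ j, |μ i j - μ' i j| with hT
  have hTbound : 1 - s ≤ T := by
    have e1 : 1 - s = ∑ x : Fin k → Fin n, P x * (1 - ∏ i, f i (x i)) := by
      rw [Finset.sum_congr rfl fun (x : Fin k → Fin n) _ =>
        (mul_one_sub (P x) (∏ i, f i (x i)))]
      rw [Finset.sum_sub_distrib, hPsum, ← hsdef]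
    have e2 : ∑ x : Fin k → Fin n, P x * (1 - ∏ i, f i (x i))
        ≤ ∑ x : Fin k → Fin n, P x * ∑ i, (1 - f i (x i)) := by
      refine Finset.sum_le_sum fun x _ => mul_le_mul_of_nonneg_left ?_ (hP0 x)
      exact one_sub_prod_le univ (fun i => f i (x i)) (fun i _ => hf0 i (x i))
        (fun i _ => hf1 i (x i))
    have e3 : ∑ x : Fin k → Fin n, P x * ∑ i, (1 - f i (x i))
        = ∑ i, ∑ j, μ i j * (1 - f i j) := by
      rw [Finset.sum_congr rfl fun (x : Fin k → Fin n) _ =>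
        Finset.mul_sum univ (fun i => 1 - f i (x i)) (P x), Finset.sum_comm]
      refine Finset.sum_congr rfl fun i _ => ?_
      rw [← marg_regroup P (fun a => 1 - f i a) i]
      exact Finset.sum_congr rfl fun j _ => by rw [hPm]
    have e4 : ∑ i, ∑ j, μ i j * (1 - f i j) ≤ T := by
      rw [hT]
      refine Finset.sum_le_sum fun i _ => Finset.sum_le_sum fun j _ => ?_
      rw [mul_one_sub, hmul]
      rcases le_total (μ' i j) (μ i j) with h | h
      · rw [min_eq_left h]; rw [abs_of_nonneg (sub_nonneg.mpr h)]
      · rw [min_eq_right h]; simp [abs_nonneg]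
    calc 1 - s = _ := e1
      _ ≤ _ := e2
      _ = _ := e3
      _ ≤ T := e4
  have hdiff : |dotT (fun x => Phat x + e x) C - dotT P C| ≤ Cm * (2 * (1 - s)) := by
    unfold dotT
    rw [← Finset.sum_sub_distrib]
    calc |∑ x : Fin k → Fin n, ((Phat x + e x) * C x - P x * C x)|
        ≤ ∑ x : Fin k → Fin n, |(Phat x + e x) * C x - P x * C x| :=
          Finset.abs_sum_le_sum_abs _ _
      _ ≤ ∑ x : Fin k → Fin n, ((P x - Phat x) + e x) * Cm := by
          refine Finset.sum_le_sum fun x _ => ?_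
          have h1 : (Phat x + e x) * C x - P x * C x = ((Phat x - P x) + e x) * C x := by ring
          rw [h1, abs_mul]
          refine mul_le_mul ?_ (hCle x) (abs_nonneg _) ?_
          · calc |Phat x - P x + e x| ≤ |Phat x - P x| + |e x| := abs_add_le _ _
              _ = (P x - Phat x) + e x := by
                  rw [abs_of_nonpos (sub_nonpos.mpr (hPhatle x)), abs_of_nonneg (he0 x)]
                  ring
          · exact add_nonneg (sub_nonneg.mpr (hPhatle x)) (he0 x)
      _ = ((1 - s) + (1 - s)) * Cm := by
          rw [← Finset.sum_mul, Finset.sum_add_distrib, Finset.sum_sub_distrib, hPsum, hesum,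
            ← hsdef]
      _ = Cm * (2 * (1 - s)) := by ring
  have : dotT (fun x => Phat x + e x) C ≤ dotT P C + Cm * (2 * (1 - s)) := by
    have := (abs_sub_le_iff.mp hdiff).1
    linarith
  refine this.trans ?_
  have : Cm * (2 * (1 - s)) ≤ 2 * Cm * T := by
    have := mul_le_mul_of_nonneg_left hTbound hCm0
    nlinarith
  linarith

/-- μ ↦ MOT_C(μ) is 2·C_max-Lipschitz in entrywise ℓ₁ norm. -/
theorem stmt_4 {n k : ℕ} (hn : 0 < n) (C : (Fin k → Fin n) → ℝ)
    (μ μ' : Fin k → Fin n → ℝ) (hμ : ∀ i, simplex (μ i)) (hμ' : ∀ i, simplex (μ' i)) :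
    |MOT C μ - MOT C μ'| ≤
      2 * (⨆ x : Fin k → Fin n, |C x|) * ∑ i, ∑ j, |μ i j - μ' i j| := by
  rcases Nat.eq_zero_or_pos k with hk | hk
  · subst hk
    have heq : transport μ = transport μ' := by
      unfold transport
      ext P
      exact ⟨fun ⟨h1, _⟩ => ⟨h1, fun i => i.elim0⟩, fun ⟨h1, _⟩ => ⟨h1, fun i => i.elim0⟩⟩
    rw [MOT, MOT, heq, sub_self, abs_zero]
    simp
  · set Cm : ℝ := ⨆ x : Fin k → Fin n, |C x| with hCm
    have hne : Nonempty (Fin k → Fin n) := ⟨fun _ => ⟨0, hn⟩⟩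
    have hbddC : BddAbove (Set.range fun x : Fin k → Fin n => |C x|) :=
      Set.Finite.bddAbove (Set.finite_range _)
    have hCle : ∀ x, |C x| ≤ Cm := fun x => le_ciSup hbddC x
    have hbdd : ∀ (ν : Fin k → Fin n → ℝ), (∀ i, simplex (ν i)) →
        BddBelow ((fun P => dotT P C) '' transport ν) := by
      intro ν hν
      refine ⟨-Cm, ?_⟩
      rintro y ⟨P, ⟨hP0, hPm⟩, rfl⟩
      have hPsum : ∑ x : Fin k → Fin n, P x = 1 := by
        rw [← sum_marg P ⟨0, hk⟩, Finset.sum_congr rfl fun j _ => hPm ⟨0, hk⟩ j]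
        exact (hν ⟨0, hk⟩).2
      have : ∑ x : Fin k → Fin n, P x * (-Cm) ≤ dotT P C := by
        unfold dotT
        refine Finset.sum_le_sum fun x _ => mul_le_mul_of_nonneg_left ?_ (hP0 x)
        have := hCle x
        have := neg_abs_le (C x)
        linarith
      rw [← Finset.sum_mul, hPsum, one_mul] at this
      exact this
    have key : ∀ (ν ν' : Fin k → Fin n → ℝ), (∀ i, simplex (ν i)) → (∀ i, simplex (ν' i)) →
        MOT C ν' ≤ MOT C ν + 2 * Cm * ∑ i, ∑ j, |ν i j - ν' i j| := by
      intro ν ν' hν hν'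
      rw [← sub_le_iff_le_add]
      unfold MOT
      refine le_csInf ⟨_, ⟨_, prod_mem_transport ν hν, rfl⟩⟩ ?_
      rintro b ⟨P, hP, rfl⟩
      obtain ⟨Q, hQ, hQle⟩ := exists_close hn hk C ν ν' hν hν' P hP
      have h1 : sInf ((fun P => dotT P C) '' transport ν') ≤ dotT Q C :=
        csInf_le (hbdd ν' hν') ⟨Q, hQ, rfl⟩
      simp only at hQle h1 ⊢
      linarith
    have h1 := key μ μ' hμ hμ'
    have h2 := key μ' μ hμ' hμ
    have hsymm : ∑ i, ∑ j, |μ' i j - μ i j| = ∑ i, ∑ j, |μ i j - μ' i j| :=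
      Finset.sum_congr rfl fun i _ => Finset.sum_congr rfl fun j _ => abs_sub_comm _ _
    rw [hsymm] at h2
    rw [abs_sub_le_iff]
    constructor <;> linarith
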